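/- (Symmetric functions property, m = 1 case) Let A be a commutative ring containing ℚ, and I the ideal of A[x_1,…,x_n] generated by x_1²,…,x_n². Every polynomial invariant under all permutations of the variables x_1,…,x_n is congruent modulo I to a unique polynomial (of degree ≤ n) in the single element x_1 + ⋯ + x_n. Equivalently, A[y]/(y^{n+1}) → (A[x_1,…,x_n]/I)^{S_n}, y ↦ x_1+⋯+x_n, is an algebra isomorphism. -/

import Mathlib

open MvPolynomial

namespace Stmt15Aux
open Finset

/-! ### Indicator finsupps of finsets -/

variable {n : ℕ}

noncomputable def indic (t : Finset (Fin n)) : Fin n →₀ ℕ := ∑ i ∈ t, Finsupp.single i 1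

lemma indic_apply (t : Finset (Fin n)) (j : Fin n) :
    indic t j = if j ∈ t then 1 else 0 := by
  classical
  simp [indic, Finsupp.finset_sum_apply, Finsupp.single_apply, Finset.sum_ite_eq' t j]

lemma indic_le_one (t : Finset (Fin n)) (j : Fin n) : indic t j ≤ 1 := by
  rw [indic_apply]; split <;> omega

lemma indic_inj {t t' : Finset (Fin n)} (h : indic t = indic t') : t = t' := by
  ext j
  have := congrArg (fun f => f j) h
  simp only [indic_apply] at this
  by_cases h1 : j ∈ t <;> by_cases h2 : j ∈ t' <;> simp_all

lemma eq_indic {m : Fin n →₀ ℕ} (hm : ∀ j, m j ≤ 1) : m = indic m.support := by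
  ext j
  rw [indic_apply]
  by_cases h : j ∈ m.support
  · have := Finsupp.mem_support_iff.1 h
    have := hm j
    simp only [if_pos h]; omega
  · simp only [if_neg h]
    exact Finsupp.notMem_support_iff.1 h

lemma exists_perm_image {t t' : Finset (Fin n)} (h : t.card = t'.card) :
    ∃ σ : Equiv.Perm (Fin n), t.image σ = t' := by
  classical
  have h2 : ((tᶜ : Finset (Fin n))).card = (t'ᶜ).card := by
    rw [Finset.card_compl, Finset.card_compl, h]
  let e : {x // x ∈ t} ≃ {x // x ∈ t'} := Finset.equivOfCardEq h
  let f0 : {x // x ∈ (tᶜ : Finset (Fin n))} ≃ {x // x ∈ (t'ᶜ : Finset (Fin n))} :=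
    Finset.equivOfCardEq h2
  let f : {x // ¬ x ∈ t} ≃ {x // ¬ x ∈ t'} :=
    ((Equiv.subtypeEquivRight (fun a => (Finset.mem_compl (s := t)).symm)).trans f0).trans
      (Equiv.subtypeEquivRight (fun a => Finset.mem_compl (s := t')))
  refine ⟨Equiv.subtypeCongr e f, ?_⟩
  have hsub : t.image (Equiv.subtypeCongr e f) ⊆ t' := by
    intro a ha
    obtain ⟨i, hi, rfl⟩ := Finset.mem_image.1 ha
    have : Equiv.subtypeCongr e f i = (e ⟨i, hi⟩ : Fin n) := by
      simp [Equiv.subtypeCongr, hi]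
    rw [this]
    exact Finset.coe_mem _
  refine Finset.eq_of_subset_of_card_le hsub ?_
  rw [Finset.card_image_of_injective _ (Equiv.injective _), h]

lemma mapDomain_indic (σ : Equiv.Perm (Fin n)) (t : Finset (Fin n)) :
    Finsupp.mapDomain σ (indic t) = indic (t.image σ) := by
  classical
  rw [indic, indic, Finset.sum_image (fun a _ b _ h => σ.injective h)]
  rw [show Finsupp.mapDomain (σ : Fin n → Fin n)
      = Finsupp.mapDomain.addMonoidHom (σ : Fin n → Fin n) from rfl, map_sum]
  exact Finset.sum_congr rfl fun i _ => Finsupp.mapDomain_single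

/-! ### The ideal of squares -/

variable {A : Type*} [CommRing A]

/-- The ideal generated by the squares of the variables. -/
noncomputable def sqI (n : ℕ) (A : Type*) [CommRing A] : Ideal (MvPolynomial (Fin n) A) :=
  Ideal.span {w : MvPolynomial (Fin n) A | ∃ j : Fin n, w = X j ^ 2}

lemma Xsq_mem (j : Fin n) : (X j ^ 2 : MvPolynomial (Fin n) A) ∈ sqI n A :=
  Ideal.subset_span ⟨j, rfl⟩

lemma mem_sqI_of_support (f : MvPolynomial (Fin n) A)
    (h : ∀ m ∈ f.support, ∃ j, 2 ≤ m j) : f ∈ sqI n A := by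
  rw [f.as_sum]
  refine Ideal.sum_mem _ fun m hm => ?_
  obtain ⟨j, hj⟩ := h m hm
  have hle : Finsupp.single j 2 ≤ m := by
    rwa [Finsupp.single_le_iff]
  have : monomial m (coeff m f) = X j ^ 2 * monomial (m - Finsupp.single j 2) (coeff m f) := by
    rw [X_pow_eq_monomial, monomial_mul, one_mul, add_tsub_cancel_of_le hle]
  rw [this]
  exact Ideal.mul_mem_right _ _ (Xsq_mem j)

lemma support_of_mem_sqI {f : MvPolynomial (Fin n) A} (hf : f ∈ sqI n A) :
    ∀ m ∈ f.support, ∃ j, 2 ≤ m j := by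
  refine Submodule.span_induction ?_ ?_ ?_ ?_ hf
  · rintro w ⟨j, rfl⟩ m hm
    rw [MvPolynomial.mem_support_iff, X_pow_eq_monomial, coeff_monomial] at hm
    by_cases h : Finsupp.single j 2 = m
    · exact ⟨j, by simp [← h]⟩
    · simp [h] at hm
  · simp
  · intro f g _ _ hf hg m hm
    rcases Finset.mem_union.1 (MvPolynomial.support_add hm) with h | h
    exacts [hf m h, hg m h]
  · intro c f _ hf m hm
    have := MvPolynomial.support_mul c f hm
    rw [Finset.mem_add] at this
    obtain ⟨a, ha, b, hb, rfl⟩ := this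
    obtain ⟨j, hj⟩ := hf b hb
    exact ⟨j, le_trans hj (by simp)⟩

lemma coeff_eq_of_sub_mem {f g : MvPolynomial (Fin n) A} (h : f - g ∈ sqI n A)
    {m : Fin n →₀ ℕ} (hm : ∀ j, m j ≤ 1) : coeff m f = coeff m g := by
  by_contra hne
  have hmem : m ∈ (f - g).support := by
    rw [MvPolynomial.mem_support_iff, MvPolynomial.coeff_sub]
    exact sub_ne_zero_of_ne hne
  obtain ⟨j, hj⟩ := support_of_mem_sqI h m hmem
  exact absurd (hj.trans (hm j)) (by norm_num)

/-! ### Coefficients of elementary symmetric polynomials -/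

lemma coeff_esymm_indic (t : Finset (Fin n)) (k : ℕ) :
    coeff (indic t) (esymm (Fin n) A k) = if t.card = k then 1 else 0 := by
  classical
  have key : ∀ b : Finset (Fin n), ((∑ i ∈ b, Finsupp.single i (1:ℕ)) = indic t) ↔ b = t :=
    fun b => ⟨fun h => indic_inj h, fun h => by rw [h]; rfl⟩
  rw [esymm_eq_sum_monomial, coeff_sum]
  simp only [coeff_monomial]
  rw [Finset.sum_congr rfl (fun b _ => if_congr (key b) rfl rfl),
    Finset.sum_ite_eq' _ t (fun _ => (1 : A))]
  simp [Finset.mem_powersetCard_univ]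

lemma coeff_combo (c : ℕ → A) (N : ℕ) (t : Finset (Fin n)) :
    coeff (indic t) (∑ k ∈ Finset.range N, C (c k) * esymm (Fin n) A k)
      = if t.card < N then c t.card else 0 := by
  rw [coeff_sum]
  simp only [coeff_C_mul, coeff_esymm_indic, mul_ite, mul_one, mul_zero]
  rw [Finset.sum_ite_eq (Finset.range N) t.card c]
  simp [Finset.mem_range]

/-! ### The multinomial expansion modulo the ideal -/

lemma pow_sum_mod (k : ℕ) :
    (∑ j, X j : MvPolynomial (Fin n) A) ^ k
      - (k.factorial : MvPolynomial (Fin n) A) * esymm (Fin n) A k ∈ sqI n A := by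
  classical
  rw [Finset.sum_pow_eq_sum_piAntidiag,
    ← Finset.sum_filter_add_sum_filter_not (piAntidiag univ k) (fun f => ∀ i, f i ≤ 1)]
  have hgood : (∑ f ∈ (piAntidiag univ k).filter (fun f => ∀ i, f i ≤ 1),
      ((Nat.multinomial univ f : MvPolynomial (Fin n) A) * ∏ i, X i ^ f i))
      = (k.factorial : MvPolynomial (Fin n) A) * esymm (Fin n) A k := by
    rw [esymm, Finset.mul_sum]
    refine Finset.sum_nbij' (fun f => univ.filter (fun i => f i = 1))
      (fun t => fun i => if i ∈ t then 1 else 0) ?_ ?_ ?_ ?_ ?_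
    · intro f hf
      simp only [Finset.mem_filter, Finset.mem_piAntidiag] at hf
      obtain ⟨⟨hsum, -⟩, hle⟩ := hf
      rw [Finset.mem_powersetCard_univ, ← hsum, Finset.card_filter]
      refine Finset.sum_congr rfl fun i _ => ?_
      have := hle i
      interval_cases h : f i <;> simp
    · intro t ht
      simp only [Finset.mem_powersetCard_univ] at ht
      simp only [Finset.mem_filter, Finset.mem_piAntidiag]
      refine ⟨⟨?_, fun i hi => Finset.mem_univ i⟩, fun i => by split <;> omega⟩
      rw [← ht, Finset.card_eq_sum_ones t, Finset.sum_ite_mem, Finset.univ_inter]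
    · intro f hf
      simp only [Finset.mem_filter, Finset.mem_piAntidiag] at hf
      obtain ⟨⟨-, -⟩, hle⟩ := hf
      funext i
      simp only [Finset.mem_filter, Finset.mem_univ, true_and]
      have := hle i
      split <;> omega
    · intro t ht
      ext i
      simp only [Finset.mem_filter, Finset.mem_univ, true_and]
      split <;> simp_all
    · intro f hf
      simp only [Finset.mem_filter, Finset.mem_piAntidiag] at hf
      obtain ⟨⟨hsum, -⟩, hle⟩ := hf
      have hmul : Nat.multinomial univ f = k.factorial := by
        have hspec := Nat.multinomial_spec univ f
        have hprod : (∏ i : Fin n, (f i).factorial) = 1 := by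
          refine Finset.prod_eq_one fun i _ => ?_
          have := hle i
          interval_cases h : f i <;> simp
        rw [hprod, one_mul, hsum] at hspec
        exact hspec
      rw [hmul]
      congr 1
      rw [← Finset.prod_filter_mul_prod_filter_not univ (fun i => f i = 1)]
      have h2 : (∏ i ∈ univ.filter (fun i => ¬ f i = 1),
          (X i : MvPolynomial (Fin n) A) ^ f i) = 1 := by
        refine Finset.prod_eq_one fun i hi => ?_
        simp only [Finset.mem_filter] at hi
        have := hle i
        have : f i = 0 := by omega
        simp [this]
      rw [h2, mul_one]
      exact Finset.prod_congr rfl fun i hi => by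
        simp only [Finset.mem_filter] at hi; rw [hi.2, pow_one]
  rw [hgood, add_comm, add_sub_cancel_right]
  refine Ideal.sum_mem _ fun f hf => ?_
  simp only [Finset.mem_filter, Finset.mem_piAntidiag, not_forall, not_le] at hf
  obtain ⟨i, hi⟩ := hf.2
  have hdvd : (X i ^ 2 : MvPolynomial (Fin n) A) ∣
      (Nat.multinomial univ f : MvPolynomial (Fin n) A) * ∏ j, X j ^ f j :=
    Dvd.dvd.mul_left ((pow_dvd_pow (X i) hi).trans
      (Finset.dvd_prod_of_mem (fun j => X j ^ f j) (Finset.mem_univ i))) _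
  obtain ⟨c, hc⟩ := hdvd
  rw [hc]
  exact Ideal.mul_mem_right _ _ (Xsq_mem i)

lemma aeval_sum_mod (p : Polynomial A) :
    Polynomial.aeval (∑ j, X j : MvPolynomial (Fin n) A) p
      - ∑ k ∈ Finset.range (p.natDegree + 1),
          C ((k.factorial : A) * p.coeff k) * esymm (Fin n) A k ∈ sqI n A := by
  rw [Polynomial.aeval_eq_sum_range, ← Finset.sum_sub_distrib]
  refine Ideal.sum_mem _ fun k _ => ?_
  have hC : (C ((k.factorial : A)) : MvPolynomial (Fin n) A)
      = (k.factorial : MvPolynomial (Fin n) A) := by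
    rw [show ((k.factorial : A)) = ((k.factorial : ℕ) : A) by norm_cast, map_natCast]
  have hterm : p.coeff k • (∑ j, X j : MvPolynomial (Fin n) A) ^ k
      - C ((k.factorial : A) * p.coeff k) * esymm (Fin n) A k
      = C (p.coeff k) * ((∑ j, X j) ^ k
          - (k.factorial : MvPolynomial (Fin n) A) * esymm (Fin n) A k) := by
    rw [MvPolynomial.smul_eq_C_mul, map_mul, ← hC]; ring
  rw [hterm]
  exact Ideal.mul_mem_left _ _ (pow_sum_mod k)

/-! ### Rationals: cancelling factorials -/

variable [Algebra ℚ A]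

lemma fac_cancel {a : A} {k : ℕ} (h : (k.factorial : A) * a = 0) : a = 0 := by
  have hfz : ((k.factorial : ℚ)) ≠ 0 := Nat.cast_ne_zero.2 k.factorial_pos.ne'
  have h2 : algebraMap ℚ A (k.factorial : ℚ) * a = 0 := by
    rw [show ((k.factorial : ℚ)) = ((k.factorial : ℕ) : ℚ) by norm_cast, map_natCast]
    exact h
  calc a = algebraMap ℚ A ((k.factorial : ℚ)⁻¹)
        * (algebraMap ℚ A (k.factorial : ℚ) * a) := by
        rw [← mul_assoc, ← map_mul, inv_mul_cancel₀ hfz, map_one, one_mul]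
    _ = 0 := by rw [h2, mul_zero]

lemma fac_inv_cancel (k : ℕ) (a : A) :
    (k.factorial : A) * ((k.factorial : ℚ)⁻¹ • a) = a := by
  have hfz : ((k.factorial : ℚ)) ≠ 0 := Nat.cast_ne_zero.2 k.factorial_pos.ne'
  rw [← nsmul_eq_mul, ← Nat.cast_smul_eq_nsmul ℚ, smul_smul]
  rw [mul_inv_cancel₀ hfz, one_smul]

end Stmt15Aux

open Stmt15Aux

open Finset

/-- Symmetric functions property (m = 1): with `I = (x_1²,…,x_n²)`, every
`S_n`-invariant polynomial is congruent mod `I` to a unique polynomial of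
degree ≤ n in `x_1 + ⋯ + x_n`; i.e. `A[y]/(y^{n+1}) → (A[x]/I)^{S_n}`,
`y ↦ x_1 + ⋯ + x_n`, is an algebra isomorphism. -/
theorem stmt_15 {A : Type*} [CommRing A] [Algebra ℚ A] (n : ℕ) :
    (∀ q : MvPolynomial (Fin n) A,
        (∀ σ : Equiv.Perm (Fin n),
          Ideal.Quotient.mk
              (Ideal.span {w : MvPolynomial (Fin n) A | ∃ j : Fin n, w = X j ^ 2})
              (rename σ q) =
            Ideal.Quotient.mk _ q) →
        ∃ p : Polynomial A, p.natDegree ≤ n ∧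
          Ideal.Quotient.mk
              (Ideal.span {w : MvPolynomial (Fin n) A | ∃ j : Fin n, w = X j ^ 2})
              (Polynomial.aeval (∑ j, X j) p) =
            Ideal.Quotient.mk _ q) ∧
    (∀ p q : Polynomial A,
        Ideal.Quotient.mk
            (Ideal.span {w : MvPolynomial (Fin n) A | ∃ j : Fin n, w = X j ^ 2})
            (Polynomial.aeval (∑ j, X j) p) =
          Ideal.Quotient.mk _ (Polynomial.aeval (∑ j, X j) q) →
        Ideal.Quotient.mk (Ideal.span ({Polynomial.X ^ (n + 1)} : Set (Polynomial A))) p =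
          Ideal.Quotient.mk _ q) ∧
    (∀ p ∈ Ideal.span ({Polynomial.X ^ (n + 1)} : Set (Polynomial A)),
        Polynomial.aeval (∑ j, (X j : MvPolynomial (Fin n) A)) p ∈
          Ideal.span {w : MvPolynomial (Fin n) A | ∃ j : Fin n, w = X j ^ 2}) ∧
    (∀ (p : Polynomial A) (σ : Equiv.Perm (Fin n)),
        Ideal.Quotient.mk
            (Ideal.span {w : MvPolynomial (Fin n) A | ∃ j : Fin n, w = X j ^ 2})
            (rename σ (Polynomial.aeval (∑ j, X j) p)) =
          Ideal.Quotient.mk _ (Polynomial.aeval (∑ j, X j) p)) := by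
  refine ⟨?_, ?_, ?_, ?_⟩
  · -- surjectivity
    intro q hq
    have hq' : ∀ σ : Equiv.Perm (Fin n), rename σ q - q ∈ sqI n A := fun σ => by
      have := hq σ; rwa [Ideal.Quotient.eq] at this
    have hex : ∀ k : ℕ, ∃ t : Finset (Fin n), k ≤ n → t.card = k := by
      intro k
      by_cases hk : k ≤ n
      · obtain ⟨t, -, ht⟩ := Finset.exists_subset_card_eq (s := (univ : Finset (Fin n))) (n := k) (by simpa using hk)
        exact ⟨t, fun _ => ht⟩
      · exact ⟨∅, fun h => absurd h hk⟩
    choose tc htc using hex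
    set c : ℕ → A := fun k => coeff (indic (tc k)) q with hc
    set g : MvPolynomial (Fin n) A := ∑ k ∈ Finset.range (n+1), C (c k) * esymm (Fin n) A k
      with hg
    have hqg : q - g ∈ sqI n A := by
      apply mem_sqI_of_support
      intro m hm
      by_contra hcon
      push_neg at hcon
      have hsf : ∀ j, m j ≤ 1 := fun j => by have := hcon j; omega
      apply MvPolynomial.mem_support_iff.1 hm
      rw [MvPolynomial.coeff_sub, sub_eq_zero]
      have hm' : m = indic m.support := eq_indic hsf
      have hmcard : m.support.card ≤ n := le_trans (Finset.card_le_univ _) (by simp)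
      have hcardtc : (tc m.support.card).card = m.support.card := htc _ hmcard
      obtain ⟨σ, hσ⟩ := exists_perm_image hcardtc
      have e1 : coeff m (rename σ q) = c m.support.card := by
        conv_lhs => rw [hm', ← hσ, ← mapDomain_indic]
        exact coeff_rename_mapDomain _ σ.injective _ _
      have e2 : coeff m (rename σ q) = coeff m q := coeff_eq_of_sub_mem (hq' σ) hsf
      have e3 : coeff m g = c m.support.card := by
        conv_lhs => rw [hm', hg]
        rw [coeff_combo, if_pos (by omega)]
      rw [← e2, e1, e3]
    refine ⟨∑ k ∈ Finset.range (n+1),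
      Polynomial.C ((k.factorial : ℚ)⁻¹ • c k) * Polynomial.X ^ k, ?_, ?_⟩
    · refine Polynomial.natDegree_sum_le_of_forall_le _ _ fun k hk => ?_
      exact le_trans (Polynomial.natDegree_C_mul_X_pow_le _ _)
        (by simp only [Finset.mem_range] at hk; omega)
    · rw [Ideal.Quotient.eq]
      have hP : Polynomial.aeval (∑ j, X j : MvPolynomial (Fin n) A)
          (∑ k ∈ Finset.range (n+1),
            Polynomial.C ((k.factorial : ℚ)⁻¹ • c k) * Polynomial.X ^ k) - g ∈ sqI n A := by
        rw [map_sum, hg, ← Finset.sum_sub_distrib]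
        refine Ideal.sum_mem _ fun k _ => ?_
        rw [map_mul, Polynomial.aeval_C, map_pow, Polynomial.aeval_X, MvPolynomial.algebraMap_eq]
        have hCk : (C ((k.factorial : ℚ)⁻¹ • c k) : MvPolynomial (Fin n) A)
            * (k.factorial : MvPolynomial (Fin n) A) = C (c k) := by
          rw [show ((k.factorial : MvPolynomial (Fin n) A)) = C ((k.factorial : A)) by
            rw [show ((k.factorial : A)) = ((k.factorial : ℕ) : A) by norm_cast, map_natCast],
            ← map_mul, mul_comm, fac_inv_cancel]
        have hterm : (C ((k.factorial : ℚ)⁻¹ • c k) : MvPolynomial (Fin n) A)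
            * (∑ j, X j) ^ k - C (c k) * esymm (Fin n) A k
            = C ((k.factorial : ℚ)⁻¹ • c k) * ((∑ j, X j) ^ k
                - (k.factorial : MvPolynomial (Fin n) A) * esymm (Fin n) A k) := by
          rw [mul_sub, ← mul_assoc, hCk]
        rw [hterm]
        exact Ideal.mul_mem_left _ _ (pow_sum_mod k)
      have := Ideal.sub_mem _ hP hqg
      simpa [sqI] using this
  · -- injectivity
    intro p q h
    rw [Ideal.Quotient.eq] at h ⊢
    rw [Ideal.mem_span_singleton]
    have hI : Polynomial.aeval (∑ j, X j : MvPolynomial (Fin n) A) (p - q) ∈ sqI n A := by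
      rw [map_sub]; exact h
    have hG : (∑ k ∈ Finset.range ((p - q).natDegree + 1),
        C ((k.factorial : A) * (p - q).coeff k) * esymm (Fin n) A k) ∈ sqI n A := by
      have := Ideal.sub_mem _ hI (aeval_sum_mod (p - q))
      simpa using this
    have hcoeff : ∀ k, k ≤ n → (p - q).coeff k = 0 := by
      intro k hk
      obtain ⟨t, -, ht⟩ := Finset.exists_subset_card_eq (s := (univ : Finset (Fin n))) (n := k) (by simpa using hk)
      have h0 : coeff (indic t) (∑ k ∈ Finset.range ((p - q).natDegree + 1),
          C ((k.factorial : A) * (p - q).coeff k) * esymm (Fin n) A k) = 0 := by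
        have h00 := coeff_eq_of_sub_mem
          (f := ∑ k ∈ Finset.range ((p - q).natDegree + 1),
            C ((k.factorial : A) * (p - q).coeff k) * esymm (Fin n) A k)
          (g := 0) (by rwa [sub_zero]) (indic_le_one t)
        simpa using h00
      rw [coeff_combo] at h0
      by_cases hlt : t.card < (p - q).natDegree + 1
      · rw [if_pos hlt, ht] at h0
        exact fac_cancel h0
      · exact Polynomial.coeff_eq_zero_of_natDegree_lt (by omega)
    rw [Polynomial.X_pow_dvd_iff]
    intro d hd
    exact hcoeff d (by omega)
  · -- the ideal maps in
    intro p hp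
    rw [Ideal.mem_span_singleton] at hp
    obtain ⟨c, rfl⟩ := hp
    rw [map_mul, map_pow, Polynomial.aeval_X]
    have he : esymm (Fin n) A (n+1) = 0 := by
      rw [esymm, Finset.powersetCard_eq_empty.2 (by simp), Finset.sum_empty]
    have hs : (∑ j, X j : MvPolynomial (Fin n) A) ^ (n+1) ∈ sqI n A := by
      have := pow_sum_mod (A := A) (n := n) (n+1)
      rw [he, mul_zero, sub_zero] at this
      exact this
    exact Ideal.mul_mem_right _ _ hs
  · -- equivariance
    intro p σ
    have hs : rename σ (∑ j, X j : MvPolynomial (Fin n) A) = ∑ j, X j := by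
      rw [map_sum]
      simp only [rename_X]
      exact Equiv.sum_comp σ _
    rw [← Polynomial.aeval_algHom_apply (rename σ), hs]
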